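/- Let p, q ≥ 1 with p + q ≥ 4. Then the characteristic polynomial of the adjacency matrix of the complete subdivision graph of K_{p,q}, a graph on p+q+pq vertices, equals x·(x+1)^{pq−p−q+1}·(x² + x − p)^{q−1}·(x² + x − q)^{p−1}·(x² − (pq−1)x − (p+q)). -/

import Mathlib

open Matrix SimpleGraph

/-- The vertex–edge incidence matrix of a graph, relative to an enumeration
`e` of its edges. -/
noncomputable def incMat {V : Type} [Fintype V] [DecidableEq V] {m : ℕ}
    (G : SimpleGraph V) [Fintype G.edgeSet] (e : Fin m ≃ G.edgeFinset) :
    Matrix V (Fin m) ℝ :=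
  Matrix.of fun i j => if i ∈ (e j : Sym2 V) then (1 : ℝ) else 0

instance (p q : ℕ) : DecidableRel (completeBipartiteGraph (Fin p) (Fin q)).Adj := by
  intro a b; unfold completeBipartiteGraph; dsimp; infer_instance

namespace Stmt19Aux

open Kronecker Polynomial

noncomputable def Jmat (n : ℕ) : Matrix (Fin n) (Fin n) ℝ := Matrix.of fun _ _ => 1

lemma IJ_mul (n : ℕ) (a b c d : ℝ) :
    (a • (1 : Matrix (Fin n) (Fin n) ℝ) + b • Jmat n) * (c • 1 + d • Jmat n)
      = (a*c) • 1 + (a*d + b*c + n*b*d) • Jmat n := by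
  ext i j
  simp only [Matrix.mul_apply, Matrix.add_apply, Matrix.smul_apply, Matrix.one_apply, Jmat,
    Matrix.of_apply, smul_eq_mul, mul_ite, ite_mul, mul_zero, zero_mul, mul_one, one_mul,
    add_mul, mul_add, Finset.sum_add_distrib, Finset.sum_ite_eq, Finset.sum_ite_eq',
    Finset.mem_univ, if_true, Finset.sum_const, Finset.card_univ, Fintype.card_fin, nsmul_eq_mul]
  by_cases h : i = j <;> simp [h] <;> ring

lemma det_IJ (n : ℕ) (hn : 1 ≤ n) (a b : ℝ) (ha : a ≠ 0) :
    det (a • (1 : Matrix (Fin n) (Fin n) ℝ) + b • Jmat n) = a ^ (n - 1) * (a + n * b) := by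
  have h1 : a • (1 : Matrix (Fin n) (Fin n) ℝ) + b • Jmat n
      = a • (1 + Matrix.replicateCol Unit (fun _ : Fin n => b / a) * Matrix.replicateRow Unit (fun _ : Fin n => (1:ℝ))) := by
    ext i j
    by_cases h : i = j <;>
      simp [Jmat, Matrix.mul_apply, Matrix.one_apply, h, mul_add] <;> field_simp
  rw [h1, det_smul, det_one_add_replicateCol_mul_replicateRow]
  simp only [dotProduct, Fintype.card_fin]
  have h2 : ∑ _i : Fin n, (1 : ℝ) * (b / a) = n * (b/a) := by simp [mul_comm]
  rw [h2]
  have hn' : n = (n-1) + 1 := (Nat.succ_pred_eq_of_pos hn).symm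
  rw [show a ^ n = a ^ (n-1) * a by rw [← pow_succ, ← hn']]
  field_simp

noncomputable def Bc (p q : ℕ) : Matrix (Fin p ⊕ Fin q) (Fin p × Fin q) ℝ :=
  Matrix.of fun v ij =>
    Sum.elim (fun s => if ij.1 = s then (1:ℝ) else 0) (fun t => if ij.2 = t then (1:ℝ) else 0) v

lemma hBtB (p q : ℕ) : (Bc p q)ᵀ * (Bc p q) =
    Matrix.of fun ij i'j' => (if ij.1 = i'j'.1 then (1:ℝ) else 0) + (if ij.2 = i'j'.2 then 1 else 0) := by
  ext ⟨i,j⟩ ⟨i',j'⟩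
  simp only [Matrix.mul_apply, Matrix.transpose_apply, Bc, Matrix.of_apply, Fintype.sum_sum_type,
    Sum.elim_inl, Sum.elim_inr, ite_mul, one_mul, zero_mul]
  simp [Finset.sum_ite_eq, eq_comm]

section main
variable (p q : ℕ) (x : ℝ)

noncomputable def Emat : Matrix (Fin q) (Fin q) ℝ := (x+1) • 1 + (-x⁻¹) • Jmat q
noncomputable def Emat' : Matrix (Fin q) (Fin q) ℝ :=
  (x+1)⁻¹ • 1 + (((x+1)*(x^2+x-q))⁻¹) • Jmat q
noncomputable def Fmat : Matrix (Fin q) (Fin q) ℝ := (-x⁻¹) • 1 + (-1 : ℝ) • Jmat q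
noncomputable def Umat : Matrix (Fin p × Fin q) (Fin q) ℝ :=
  Matrix.of fun ij t => if ij.2 = t then (1:ℝ) else 0
noncomputable def Vmat : Matrix (Fin q) (Fin p × Fin q) ℝ :=
  Matrix.of fun t ij => Fmat q x t ij.2

lemma hEE' (hx : x ≠ 0) (hu : x + 1 ≠ 0) (hs : x^2+x-(q:ℝ) ≠ 0) :
    Emat q x * Emat' q x = 1 := by
  rw [Emat, Emat', IJ_mul]
  have c1 : (x+1) * (x+1)⁻¹ = 1 := mul_inv_cancel₀ hu
  have c2 : (x + 1) * ((x + 1) * (x ^ 2 + x - (q:ℝ)))⁻¹ + -x⁻¹ * (x + 1)⁻¹ +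
      (q:ℝ) * -x⁻¹ * ((x + 1) * (x ^ 2 + x - (q:ℝ)))⁻¹ = 0 := by
    generalize hD : x^2+x-(q:ℝ) = D at hs ⊢
    field_simp
    rw [← hD]
    ring
  rw [c1, c2]
  simp

lemma hG (hx : x ≠ 0) :
    ((x+1) • (1 : Matrix (Fin p × Fin q) (Fin p × Fin q) ℝ)
        - Matrix.of (fun _ _ => (1:ℝ)) - x⁻¹ • ((Bc p q)ᵀ * Bc p q))
      = (1 : Matrix (Fin p) (Fin p) ℝ) ⊗ₖ Emat q x + Umat p q * Vmat p q x := by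
  rw [hBtB]
  ext ⟨i,j⟩ ⟨i',j'⟩
  simp only [Matrix.sub_apply, Matrix.smul_apply, Matrix.one_apply, Matrix.of_apply,
    Matrix.add_apply, Matrix.mul_apply, kroneckerMap_apply, Umat, Vmat, Fmat, Emat, Jmat,
    Prod.mk.injEq, smul_eq_mul, ite_mul, one_mul, zero_mul, Finset.sum_ite_eq,
    Finset.mem_univ, if_true]
  by_cases h1 : i = i' <;> by_cases h2 : j = j' <;> simp [h1, h2] <;> ring

lemma hW :
    Vmat p q x * ((1 : Matrix (Fin p) (Fin p) ℝ) ⊗ₖ Emat' q x * Umat p q)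
      = (p:ℝ) • (Fmat q x * Emat' q x) := by
  have hK : (1 : Matrix (Fin p) (Fin p) ℝ) ⊗ₖ Emat' q x * Umat p q
      = Matrix.of fun ij t => Emat' q x ij.2 t := by
    ext ⟨i,j⟩ t
    simp only [Matrix.mul_apply, kroneckerMap_apply, Umat, Matrix.of_apply,
      Fintype.sum_prod_type, Matrix.one_apply, mul_ite, mul_zero, mul_one, ite_mul, zero_mul,
      one_mul, Finset.sum_ite_eq', Finset.sum_ite_eq, Finset.mem_univ, if_true]
  rw [hK]
  ext t t'
  simp only [Matrix.mul_apply, Matrix.of_apply, Fintype.sum_prod_type, Vmat, Matrix.smul_apply,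
    smul_eq_mul, Finset.sum_const, Finset.card_univ, Fintype.card_fin, nsmul_eq_mul]

end main

lemma pow_identity (p' q' : ℕ) (x u S T W : ℝ) (hx : x ≠ 0) (hu : u ≠ 0) (hS : S ≠ 0) :
    x^((p'+1)+(q'+1)) * ((u^q' * (S/x))^(p'+1) * ((T/(x*u))^q' * (W/S)))
      = x * u^(p'*q') * T^q' * S^p' * W := by
  rw [mul_pow, div_pow, div_pow, mul_pow, ← pow_mul]
  field_simp
  ring

lemma scalar_final (p q : ℕ) (hp : 1 ≤ p) (hq : 1 ≤ q) (x : ℝ)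
    (hx : x ≠ 0) (hu : x + 1 ≠ 0) (hs : x^2+x-(q:ℝ) ≠ 0) (ht : x^2+x-(p:ℝ) ≠ 0) :
    x^(p+q) * (((x+1)^(q-1) * ((x+1) + (q:ℝ)*(-x⁻¹)))^p *
      ((1 + (p:ℝ)*((-x⁻¹)*(x+1)⁻¹))^(q-1) *
        ((1 + (p:ℝ)*((-x⁻¹)*(x+1)⁻¹)) + (q:ℝ)*((p:ℝ)*((-x⁻¹)*((x+1)*(x^2+x-(q:ℝ)))⁻¹ +
          (-1)*(x+1)⁻¹ + (q:ℝ)*(-1)*((x+1)*(x^2+x-(q:ℝ)))⁻¹)))))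
      = x * (x + 1) ^ ((p - 1) * (q - 1)) *
          (x ^ 2 + x - (p : ℝ)) ^ (q - 1) * (x ^ 2 + x - (q : ℝ)) ^ (p - 1) *
          (x ^ 2 - ((p : ℝ) * (q : ℝ) - 1) * x - ((p : ℝ) + (q : ℝ))) := by
  have e1 : (x+1) + (q:ℝ)*(-x⁻¹) = (x^2+x-(q:ℝ))/x := by field_simp; ring
  have e2 : 1 + (p:ℝ)*((-x⁻¹)*(x+1)⁻¹) = (x^2+x-(p:ℝ))/(x*(x+1)) := by field_simp; ring
  have e3 : (1 + (p:ℝ)*((-x⁻¹)*(x+1)⁻¹)) + (q:ℝ)*((p:ℝ)*((-x⁻¹)*((x+1)*(x^2+x-(q:ℝ)))⁻¹ +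
      (-1)*(x+1)⁻¹ + (q:ℝ)*(-1)*((x+1)*(x^2+x-(q:ℝ)))⁻¹))
      = (x ^ 2 - ((p : ℝ) * (q : ℝ) - 1) * x - ((p : ℝ) + (q : ℝ)))/(x^2+x-(q:ℝ)) := by
    generalize hD : x^2+x-(q:ℝ) = D at hs ⊢
    field_simp
    rw [← hD]
    ring
  rw [e3, e2, e1]
  obtain ⟨p', rfl⟩ : ∃ p', p = p' + 1 := ⟨p - 1, (Nat.succ_pred_eq_of_pos hp).symm⟩
  obtain ⟨q', rfl⟩ : ∃ q', q = q' + 1 := ⟨q - 1, (Nat.succ_pred_eq_of_pos hq).symm⟩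
  simp only [Nat.add_sub_cancel]
  exact pow_identity p' q' x (x+1) _ _ _ hx hu hs

lemma main_det (p q : ℕ) (hp : 1 ≤ p) (hq : 1 ≤ q) (x : ℝ)
    (hx : x ≠ 0) (hu : x + 1 ≠ 0) (hs : x^2+x-(q:ℝ) ≠ 0) (ht : x^2+x-(p:ℝ) ≠ 0) :
    det (Matrix.fromBlocks (x • 1) (-(Bc p q)) (-(Bc p q)ᵀ)
        ((x+1) • 1 - Matrix.of (fun _ _ => (1:ℝ))))
      = x * (x + 1) ^ ((p - 1) * (q - 1)) *
          (x ^ 2 + x - (p : ℝ)) ^ (q - 1) * (x ^ 2 + x - (q : ℝ)) ^ (p - 1) *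
          (x ^ 2 - ((p : ℝ) * (q : ℝ) - 1) * x - ((p : ℝ) + (q : ℝ))) := by
  have hA : (x • (1 : Matrix (Fin p ⊕ Fin q) (Fin p ⊕ Fin q) ℝ)) * (x⁻¹ • 1) = 1 := by
    rw [smul_mul_smul_comm, mul_inv_cancel₀ hx, Matrix.one_mul, one_smul]
  haveI : Invertible (x • (1 : Matrix (Fin p ⊕ Fin q) (Fin p ⊕ Fin q) ℝ)) :=
    invertibleOfRightInverse _ _ hA
  rw [Matrix.det_fromBlocks₁₁]
  have hinvA : ⅟(x • (1 : Matrix (Fin p ⊕ Fin q) (Fin p ⊕ Fin q) ℝ)) = x⁻¹ • 1 :=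
    invOf_eq_right_inv hA
  rw [hinvA]
  have hSchur : (-(Bc p q)ᵀ) * (x⁻¹ • (1 : Matrix (Fin p ⊕ Fin q) (Fin p ⊕ Fin q) ℝ))
        * (-(Bc p q)) = x⁻¹ • ((Bc p q)ᵀ * Bc p q) := by
    simp only [Matrix.neg_mul, Matrix.mul_neg, neg_neg]
    rw [Matrix.mul_smul, Matrix.mul_one, Matrix.smul_mul]
  rw [hSchur, hG p q x hx]
  have hEE'k : ((1 : Matrix (Fin p) (Fin p) ℝ) ⊗ₖ Emat q x) * (1 ⊗ₖ Emat' q x) = 1 := by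
    rw [← Matrix.mul_kronecker_mul, Matrix.one_mul, hEE' q x hx hu hs,
      Matrix.one_kronecker_one]
  have hfac : (1 : Matrix (Fin p) (Fin p) ℝ) ⊗ₖ Emat q x + Umat p q * Vmat p q x
      = (1 ⊗ₖ Emat q x) * (1 + (1 ⊗ₖ Emat' q x) * (Umat p q * Vmat p q x)) := by
    rw [Matrix.mul_add, Matrix.mul_one, ← Matrix.mul_assoc, hEE'k, Matrix.one_mul]
  rw [hfac, det_mul, ← Matrix.mul_assoc, Matrix.det_one_add_mul_comm, hW p q x]
  have hdetE : det (Emat q x) = (x+1)^(q-1) * ((x+1) + (q:ℝ)*(-x⁻¹)) := by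
    rw [Emat]; exact det_IJ q hq _ _ hu
  have hdetkron : det ((1 : Matrix (Fin p) (Fin p) ℝ) ⊗ₖ Emat q x) = det (Emat q x) ^ p := by
    rw [Matrix.det_kronecker]
    simp
  have hFE' : Fmat q x * Emat' q x
      = ((-x⁻¹)*(x+1)⁻¹) • 1 + ((-x⁻¹)*((x+1)*(x^2+x-(q:ℝ)))⁻¹ +
          (-1)*(x+1)⁻¹ + (q:ℝ)*(-1)*((x+1)*(x^2+x-(q:ℝ)))⁻¹) • Jmat q := by
    rw [Fmat, Emat', IJ_mul]
  have hone : (1 : Matrix (Fin q) (Fin q) ℝ) + (p:ℝ) • (Fmat q x * Emat' q x)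
      = (1 + (p:ℝ)*((-x⁻¹)*(x+1)⁻¹)) • 1 + ((p:ℝ)*((-x⁻¹)*((x+1)*(x^2+x-(q:ℝ)))⁻¹ +
          (-1)*(x+1)⁻¹ + (q:ℝ)*(-1)*((x+1)*(x^2+x-(q:ℝ)))⁻¹)) • Jmat q := by
    rw [hFE']
    module
  have ha'' : 1 + (p:ℝ)*((-x⁻¹)*(x+1)⁻¹) ≠ 0 := by
    have h : 1 + (p:ℝ)*((-x⁻¹)*(x+1)⁻¹) = (x^2+x-(p:ℝ))/(x*(x+1)) := by field_simp; ring
    rw [h]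
    exact div_ne_zero ht (mul_ne_zero hx hu)
  have hdetfinal : det ((1 : Matrix (Fin q) (Fin q) ℝ) + (p:ℝ) • (Fmat q x * Emat' q x))
      = (1 + (p:ℝ)*((-x⁻¹)*(x+1)⁻¹))^(q-1) *
        ((1 + (p:ℝ)*((-x⁻¹)*(x+1)⁻¹)) + (q:ℝ)*((p:ℝ)*((-x⁻¹)*((x+1)*(x^2+x-(q:ℝ)))⁻¹ +
          (-1)*(x+1)⁻¹ + (q:ℝ)*(-1)*((x+1)*(x^2+x-(q:ℝ)))⁻¹))) := by
    rw [hone]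
    exact det_IJ q hq _ _ ha''
  have hdetA : det (x • (1 : Matrix (Fin p ⊕ Fin q) (Fin p ⊕ Fin q) ℝ)) = x^(p+q) := by
    rw [Matrix.det_smul]
    simp [Fintype.card_sum]
  rw [hdetA, hdetkron, hdetE, hdetfinal]
  rw [show x^(p+q) * (((x+1)^(q-1) * ((x+1) + (q:ℝ)*(-x⁻¹)))^p * _) = _ from
    scalar_final p q hp hq x hx hu hs ht]

def endpts (p q : ℕ) (hp : 1 ≤ p) (hq : 1 ≤ q) : Sym2 (Fin p ⊕ Fin q) → Fin p × Fin q :=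
  Sym2.lift
    ⟨fun u v =>
        Sum.elim (fun i => Sum.elim (fun _ => (⟨0, hp⟩, ⟨0, hq⟩)) (fun j => (i, j)) v)
          (fun j => Sum.elim (fun i => (i, j)) (fun _ => (⟨0, hp⟩, ⟨0, hq⟩)) v) u,
      by intro u v; cases u <;> cases v <;> rfl⟩

@[simp] lemma endpts_mk (p q : ℕ) (hp : 1 ≤ p) (hq : 1 ≤ q) (i : Fin p) (j : Fin q) :
    endpts p q hp hq s(Sum.inl i, Sum.inr j) = (i, j) := rfl

lemma edge_eq (p q : ℕ) (hp : 1 ≤ p) (hq : 1 ≤ q)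
    (E : (completeBipartiteGraph (Fin p) (Fin q)).edgeFinset) :
    (E : Sym2 (Fin p ⊕ Fin q))
      = s(Sum.inl (endpts p q hp hq E).1, Sum.inr (endpts p q hp hq E).2) := by
  obtain ⟨E, hE⟩ := E
  induction E using Sym2.inductionOn with
  | hf u v =>
    rw [SimpleGraph.mem_edgeFinset, SimpleGraph.mem_edgeSet] at hE
    rcases u with i | j <;> rcases v with i' | j'
    · simp at hE
    · rfl
    · exact Sym2.eq_swap
    · simp at hE

lemma reindex_lemma (p q : ℕ) (hp : 1 ≤ p) (hq : 1 ≤ q)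
    (e : Fin (p * q) ≃ (completeBipartiteGraph (Fin p) (Fin q)).edgeFinset) (x : ℝ) :
    (x • (1 : Matrix ((Fin p ⊕ Fin q) ⊕ Fin (p * q)) ((Fin p ⊕ Fin q) ⊕ Fin (p * q)) ℝ) -
        Matrix.fromBlocks 0 (incMat (completeBipartiteGraph (Fin p) (Fin q)) e)
          (incMat (completeBipartiteGraph (Fin p) (Fin q)) e)ᵀ
          (Matrix.of (fun _ _ => (1 : ℝ)) - 1)).det
      = det (Matrix.fromBlocks (x • 1) (-(Bc p q)) (-(Bc p q)ᵀ)
          ((x+1) • 1 - Matrix.of (fun _ _ => (1:ℝ)))) := by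
  set G := completeBipartiteGraph (Fin p) (Fin q) with hGdef
  have hadj : ∀ (i : Fin p) (j : Fin q), G.Adj (Sum.inl i) (Sum.inr j) := by
    intro i j; simp [hGdef]
  let φ : Fin (p * q) ≃ Fin p × Fin q :=
  { toFun := fun k => endpts p q hp hq (e k)
    invFun := fun ij => e.symm ⟨s(Sum.inl ij.1, Sum.inr ij.2), by
      rw [SimpleGraph.mem_edgeFinset, SimpleGraph.mem_edgeSet]; exact hadj ij.1 ij.2⟩
    left_inv := by
      intro k
      have h := edge_eq p q hp hq (e k)
      simp only
      conv_lhs => rw [show (⟨s(Sum.inl (endpts p q hp hq (e k)).1,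
          Sum.inr (endpts p q hp hq (e k)).2), _⟩ : G.edgeFinset)
        = e k from Subtype.ext h.symm]
      exact e.symm_apply_apply k
    right_inv := by
      rintro ⟨i, j⟩
      simp only [Equiv.apply_symm_apply]
      exact endpts_mk p q hp hq i j }
  have hinc : ∀ (v : Fin p ⊕ Fin q) (k : Fin (p*q)),
      incMat G e v k = Bc p q v (φ k) := by
    intro v k
    have h := edge_eq p q hp hq (e k)
    have hφ : φ k = endpts p q hp hq (e k) := rfl
    rw [hφ]
    set r := endpts p q hp hq ((e k : Sym2 (Fin p ⊕ Fin q))) with hr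
    rcases v with i | j
    · rw [show incMat G e (Sum.inl i) k
          = (if Sum.inl i ∈ (e k : Sym2 (Fin p ⊕ Fin q)) then (1:ℝ) else 0) from rfl, h]
      simp only [Sym2.mem_iff, Bc, Matrix.of_apply, Sum.elim_inl]
      by_cases hc : i = r.1
      · simp [hc]
      · simp [hc, Ne.symm hc]
    · rw [show incMat G e (Sum.inr j) k
          = (if Sum.inr j ∈ (e k : Sym2 (Fin p ⊕ Fin q)) then (1:ℝ) else 0) from rfl, h]
      simp only [Sym2.mem_iff, Bc, Matrix.of_apply, Sum.elim_inr]
      by_cases hc : j = r.2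
      · simp [hc]
      · simp [hc, Ne.symm hc]
  rw [← Matrix.det_submatrix_equiv_self (Equiv.sumCongr (Equiv.refl (Fin p ⊕ Fin q)) φ)]
  congr 1
  ext a b
  rcases a with v | k <;> rcases b with w | l
  · simp [Matrix.one_apply, Matrix.submatrix_apply, Matrix.fromBlocks]
  · simp [Matrix.submatrix_apply, hinc v l, Matrix.fromBlocks]
    exact hinc v l
  · simp [Matrix.submatrix_apply, hinc w k, Matrix.fromBlocks]
    exact hinc w k
  · have hkl : (φ k = φ l) = (k = l) := by
      simp [EmbeddingLike.apply_eq_iff_eq]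
    simp only [Matrix.sub_apply, Matrix.smul_apply, Matrix.one_apply, Matrix.submatrix_apply,
      Matrix.fromBlocks_apply₂₂, Equiv.sumCongr_apply, Sum.map_inr, Matrix.of_apply,
      smul_eq_mul, hkl]
    by_cases h : k = l <;> simp [h]

lemma quad_finite (c : ℝ) : {y : ℝ | y^2 + y - c = 0}.Finite := by
  have hne : (X^2 + X - C c : ℝ[X]) ≠ 0 := by
    intro hcontra
    have h2 := congrArg (fun f : ℝ[X] => f.coeff 2) hcontra
    simp [coeff_X, coeff_C] at h2
  have h : {y : ℝ | y^2 + y - c = 0} = {y : ℝ | (X^2 + X - C c : ℝ[X]).IsRoot y} := by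
    ext y; simp [IsRoot]
  rw [h]
  exact Polynomial.finite_setOf_isRoot hne

lemma eval_charpoly {n : Type} [Fintype n] [DecidableEq n] (M : Matrix n n ℝ) (y : ℝ) :
    Polynomial.eval y M.charpoly = (y • (1 : Matrix n n ℝ) - M).det := by
  rw [Matrix.charpoly, ← Polynomial.coe_evalRingHom, RingHom.map_det]
  congr 1
  ext i j
  by_cases h : i = j
  · subst h; simp [Matrix.charmatrix_apply_eq]
  · simp [Matrix.charmatrix_apply_ne _ _ _ h, Matrix.one_apply_ne h]

end Stmt19Aux

/-- `A`-characteristic polynomial of the complete subdivision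
graph of $K_{p,q}$.  The exponent $pq-p-q+1$ is written as $(p-1)(q-1)$. -/
theorem stmt_19 (p q : ℕ) (hp : 1 ≤ p) (hq : 1 ≤ q) (hpq : 4 ≤ p + q)
    (e : Fin (p * q) ≃ (completeBipartiteGraph (Fin p) (Fin q)).edgeFinset)
    (x : ℝ) :
    (x • (1 : Matrix ((Fin p ⊕ Fin q) ⊕ Fin (p * q)) ((Fin p ⊕ Fin q) ⊕ Fin (p * q)) ℝ) -
        Matrix.fromBlocks 0 (incMat (completeBipartiteGraph (Fin p) (Fin q)) e)
          (incMat (completeBipartiteGraph (Fin p) (Fin q)) e)ᵀ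
          (Matrix.of (fun _ _ => (1 : ℝ)) - 1)).det
      = x * (x + 1) ^ ((p - 1) * (q - 1)) *
          (x ^ 2 + x - (p : ℝ)) ^ (q - 1) * (x ^ 2 + x - (q : ℝ)) ^ (p - 1) *
          (x ^ 2 - ((p : ℝ) * (q : ℝ) - 1) * x - ((p : ℝ) + (q : ℝ))) := by
  classical
  open Stmt19Aux Polynomial in
  set M₀ := Matrix.fromBlocks (0 : Matrix (Fin p ⊕ Fin q) (Fin p ⊕ Fin q) ℝ)
      (incMat (completeBipartiteGraph (Fin p) (Fin q)) e)
      (incMat (completeBipartiteGraph (Fin p) (Fin q)) e)ᵀ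
      (Matrix.of (fun _ _ => (1 : ℝ)) - 1) with hM₀
  have key : ∀ y : ℝ, y ≠ 0 → y + 1 ≠ 0 → y^2+y-(q:ℝ) ≠ 0 → y^2+y-(p:ℝ) ≠ 0 →
      (y • (1 : Matrix ((Fin p ⊕ Fin q) ⊕ Fin (p * q)) ((Fin p ⊕ Fin q) ⊕ Fin (p * q)) ℝ)
          - M₀).det
        = y * (y + 1) ^ ((p - 1) * (q - 1)) *
          (y ^ 2 + y - (p : ℝ)) ^ (q - 1) * (y ^ 2 + y - (q : ℝ)) ^ (p - 1) *
          (y ^ 2 - ((p : ℝ) * (q : ℝ) - 1) * y - ((p : ℝ) + (q : ℝ))) := by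
    intro y h1 h2 h3 h4
    rw [hM₀]
    exact (reindex_lemma p q hp hq e y).trans (main_det p q hp hq y h1 h2 h3 h4)
  set Rpoly : ℝ[X] := X * (X+1)^((p-1)*(q-1)) * (X^2+X-C (p:ℝ))^(q-1) *
      (X^2+X-C (q:ℝ))^(p-1) * (X^2 - C ((p:ℝ)*(q:ℝ)-1) * X - C ((p:ℝ)+(q:ℝ))) with hRp
  have hevalR : ∀ y : ℝ, Polynomial.eval y Rpoly
      = y * (y + 1) ^ ((p - 1) * (q - 1)) *
          (y ^ 2 + y - (p : ℝ)) ^ (q - 1) * (y ^ 2 + y - (q : ℝ)) ^ (p - 1) *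
          (y ^ 2 - ((p : ℝ) * (q : ℝ) - 1) * y - ((p : ℝ) + (q : ℝ))) := by
    intro y
    simp [hRp]
  have hchar : M₀.charpoly = Rpoly := by
    apply Polynomial.eq_of_infinite_eval_eq
    have hTfin : (({0} : Set ℝ) ∪ {(-1:ℝ)} ∪ {y : ℝ | y^2+y-(q:ℝ) = 0}
        ∪ {y : ℝ | y^2+y-(p:ℝ) = 0}).Finite := by
      exact (((Set.finite_singleton _).union (Set.finite_singleton _)).union
        (quad_finite (q:ℝ))).union (quad_finite (p:ℝ))
    apply Set.Infinite.mono _ hTfin.infinite_compl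
    intro y hy
    simp only [Set.mem_compl_iff, Set.mem_union, Set.mem_singleton_iff, Set.mem_setOf_eq,
      not_or] at hy
    obtain ⟨⟨⟨hy0, hy1⟩, hyq⟩, hyp⟩ := hy
    have h2 : y + 1 ≠ 0 := fun h => hy1 (by linarith)
    show Polynomial.eval y M₀.charpoly = Polynomial.eval y Rpoly
    rw [Stmt19Aux.eval_charpoly, key y hy0 h2 hyq hyp, hevalR]
  calc (x • (1 : Matrix ((Fin p ⊕ Fin q) ⊕ Fin (p * q)) ((Fin p ⊕ Fin q) ⊕ Fin (p * q)) ℝ)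
          - M₀).det
      = Polynomial.eval x M₀.charpoly := (Stmt19Aux.eval_charpoly M₀ x).symm
    _ = Polynomial.eval x Rpoly := by rw [hchar]
    _ = _ := hevalR x
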